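/- arXiv:2311.06487 — 2 statements merged into one kernel-verified Lean document; each statement's English description precedes it below -/
import Mathlib

section
/- Given a finite directed graph G and integers k ≥ 0 and l > 0, every (k,l)-ĉore of G (i.e., every weakly connected component of the (k,l)-core of G) is contained in exactly one (k,l−1)-ĉore of G (i.e., in exactly one weakly connected component of the (k,l−1)-core). -/
open scoped Classical

/-- A finite directed graph: a finite vertex set together with a finite set of edges,
each edge being an ordered pair of distinct vertices (at most one edge per ordered pair). -/
structure DirGraph (V : Type*) where
  verts : Finset V
  edges : Finset (V × V)
  edge_fst : ∀ e ∈ edges, e.1 ∈ verts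
  edge_snd : ∀ e ∈ edges, e.2 ∈ verts
  ne : ∀ e ∈ edges, e.1 ≠ e.2

namespace DirGraph

variable {V : Type*}

/-- `H` is a subgraph of `G`. -/
def IsSubgraph (H G : DirGraph V) : Prop :=
  H.verts ⊆ G.verts ∧ H.edges ⊆ G.edges

/-- The in-degree of `v` within `G`: the number of edges of `G` ending at `v`. -/
noncomputable def inDeg (G : DirGraph V) (v : V) : ℕ :=
  (G.edges.filter fun e => e.2 = v).card

/-- The out-degree of `v` within `G`: the number of edges of `G` starting at `v`. -/
noncomputable def outDeg (G : DirGraph V) (v : V) : ℕ :=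
  (G.edges.filter fun e => e.1 = v).card

/-- Every vertex of `G` has in-degree at least `k` and out-degree at least `l` within `G`. -/
def DegOK (G : DirGraph V) (k l : ℕ) : Prop :=
  ∀ v ∈ G.verts, k ≤ G.inDeg v ∧ l ≤ G.outDeg v

/-- `C` is the (k,l)-core of `G`: the largest subgraph of `G` in which every vertex has
in-degree at least `k` and out-degree at least `l`. -/
def IsKLCore (G : DirGraph V) (k l : ℕ) (C : DirGraph V) : Prop :=
  C.IsSubgraph G ∧ C.DegOK k l ∧
    ∀ H : DirGraph V, H.IsSubgraph G → H.DegOK k l → H.IsSubgraph C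

/-- Adjacency in the underlying undirected graph (edge directions ignored). -/
def Adj (G : DirGraph V) (u v : V) : Prop := (u, v) ∈ G.edges ∨ (v, u) ∈ G.edges

/-- Reachability in the underlying undirected graph (edge directions ignored). -/
def Reach (G : DirGraph V) : V → V → Prop := Relation.ReflTransGen G.Adj

/-- The weakly connected component of `q` in `G`. -/
noncomputable def component (G : DirGraph V) (q : V) : DirGraph V where
  verts := G.verts.filter fun v => G.Reach q v
  edges := G.edges.filter fun e => G.Reach q e.1
  edge_fst := by
    intro e he
    rw [Finset.mem_filter] at he ⊢
    exact ⟨G.edge_fst e he.1, he.2⟩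
  edge_snd := by
    intro e he
    rw [Finset.mem_filter] at he ⊢
    exact ⟨G.edge_snd e he.1, he.2.tail (Or.inl he.1)⟩
  ne := fun e he => G.ne e (Finset.mem_filter.mp he).1

/-- `C` is a weakly connected component of `G`. -/
def IsComponent (G C : DirGraph V) : Prop := ∃ q ∈ G.verts, C = G.component q

/-- `G` is weakly connected: any two vertices are joined by a path in the underlying
undirected graph. -/
def WeaklyConnected (G : DirGraph V) : Prop :=
  ∀ u ∈ G.verts, ∀ v ∈ G.verts, G.Reach u v

/-- Reachability along directed paths. -/
def DiReach (G : DirGraph V) : V → V → Prop :=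
  Relation.ReflTransGen fun u v => (u, v) ∈ G.edges

/-- `G` is strongly connected: every vertex is reachable from every other vertex
by a directed path. -/
def StronglyConnected (G : DirGraph V) : Prop :=
  ∀ u ∈ G.verts, ∀ v ∈ G.verts, G.DiReach u v

/-- The union of two graphs: union of vertex sets, union of edge sets. -/
noncomputable def union [DecidableEq V] (G₁ G₂ : DirGraph V) : DirGraph V where
  verts := G₁.verts ∪ G₂.verts
  edges := G₁.edges ∪ G₂.edges
  edge_fst := by
    intro e he
    rcases Finset.mem_union.mp he with h | h
    · exact Finset.mem_union_left _ (G₁.edge_fst e h)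
    · exact Finset.mem_union_right _ (G₂.edge_fst e h)
  edge_snd := by
    intro e he
    rcases Finset.mem_union.mp he with h | h
    · exact Finset.mem_union_left _ (G₁.edge_snd e h)
    · exact Finset.mem_union_right _ (G₂.edge_snd e h)
  ne := by
    intro e he
    rcases Finset.mem_union.mp he with h | h
    · exact G₁.ne e h
    · exact G₂.ne e h

/-- The subgraph of `G` induced by a vertex set `S`: vertex set `S` and all edges of `G`
with both endpoints in `S`. -/
noncomputable def induce (G : DirGraph V) (S : Finset V) : DirGraph V where
  verts := S
  edges := G.edges.filter fun e => e.1 ∈ S ∧ e.2 ∈ S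
  edge_fst := fun e he => ((Finset.mem_filter.mp he).2).1
  edge_snd := fun e he => ((Finset.mem_filter.mp he).2).2
  ne := fun e he => G.ne e (Finset.mem_filter.mp he).1

/-- Delete a vertex and all edges incident to it. -/
noncomputable def deleteVert [DecidableEq V] (G : DirGraph V) (v : V) : DirGraph V where
  verts := G.verts.erase v
  edges := G.edges.filter fun e => e.1 ≠ v ∧ e.2 ≠ v
  edge_fst := by
    intro e he
    rw [Finset.mem_filter] at he
    exact Finset.mem_erase.mpr ⟨he.2.1, G.edge_fst e he.1⟩
  edge_snd := by
    intro e he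
    rw [Finset.mem_filter] at he
    exact Finset.mem_erase.mpr ⟨he.2.2, G.edge_snd e he.1⟩
  ne := fun e he => G.ne e (Finset.mem_filter.mp he).1

/-- The reverse graph: same vertices, every edge reversed. -/
noncomputable def reverse [DecidableEq V] (G : DirGraph V) : DirGraph V where
  verts := G.verts
  edges := G.edges.image fun e => (e.2, e.1)
  edge_fst := by
    intro e he
    obtain ⟨a, ha, rfl⟩ := Finset.mem_image.mp he
    exact G.edge_snd a ha
  edge_snd := by
    intro e he
    obtain ⟨a, ha, rfl⟩ := Finset.mem_image.mp he
    exact G.edge_fst a ha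
  ne := by
    intro e he
    obtain ⟨a, ha, rfl⟩ := Finset.mem_image.mp he
    exact (G.ne a ha).symm

end DirGraph

namespace DirGraph

lemma ext' {V : Type*} {G H : DirGraph V} (hv : G.verts = H.verts)
    (he : G.edges = H.edges) : G = H := by
  cases G; cases H; simp_all

lemma adj_symm {V : Type*} (G : DirGraph V) : Symmetric G.Adj :=
  fun _ _ h => h.symm

lemma reach_symm {V : Type*} (G : DirGraph V) {u v : V} (h : G.Reach u v) :
    G.Reach v u :=
  (@Relation.ReflTransGen.symmetric _ G.Adj ⟨fun a b h => G.adj_symm h⟩).symm _ _ h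

lemma reach_mono {V : Type*} {G H : DirGraph V} (hE : G.edges ⊆ H.edges)
    {u v : V} (h : G.Reach u v) : H.Reach u v :=
  Relation.ReflTransGen.mono (r := G.Adj) (p := H.Adj) (fun a b (hab : G.Adj a b) => hab.imp (@hE _) (@hE _)) _ _ h

end DirGraph

open DirGraph in
/-- for `l > 0`, every weakly connected component of the (k,l)-core
is contained in exactly one weakly connected component of the (k,l-1)-core. -/
theorem klCore_component_nested {V : Type*} (G : DirGraph V) (k l : ℕ) (hl : 0 < l)
    (C C' D : DirGraph V) (hC : G.IsKLCore k l C) (hC' : G.IsKLCore k (l - 1) C')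
    (hD : C.IsComponent D) :
    ∃! D' : DirGraph V, C'.IsComponent D' ∧ D.IsSubgraph D' := by
  obtain ⟨q, hq, rfl⟩ := hD
  -- C is a subgraph of C'
  have hCC' : C.IsSubgraph C' :=
    hC'.2.2 C hC.1 (fun v hv => ⟨(hC.2.1 v hv).1, le_trans (Nat.sub_le l 1) (hC.2.1 v hv).2⟩)
  have hqC' : q ∈ C'.verts := hCC'.1 hq
  have hsub : (C.component q).IsSubgraph (C'.component q) := by
    constructor
    · intro v hv
      rw [DirGraph.component, Finset.mem_filter] at hv ⊢
      exact ⟨hCC'.1 hv.1, reach_mono hCC'.2 hv.2⟩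
    · intro e he
      rw [DirGraph.component, Finset.mem_filter] at he ⊢
      exact ⟨hCC'.2 he.1, reach_mono hCC'.2 he.2⟩
  refine ⟨C'.component q, ⟨⟨q, hqC', rfl⟩, hsub⟩, ?_⟩
  rintro D'' ⟨⟨q', hq', rfl⟩, hsub'⟩
  have hqD : q ∈ (C.component q).verts := by
    rw [DirGraph.component, Finset.mem_filter]
    exact ⟨hq, Relation.ReflTransGen.refl⟩
  have hq'q : C'.Reach q' q := by
    have := hsub'.1 hqD
    rw [DirGraph.component, Finset.mem_filter] at this
    exact this.2
  have hiff : ∀ v, C'.Reach q' v ↔ C'.Reach q v := fun v =>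
    ⟨fun h => (C'.reach_symm hq'q).trans h, fun h => hq'q.trans h⟩
  refine ext' ?_ ?_ <;> simp only [DirGraph.component] <;>
    exact Finset.filter_congr (fun x _ => by simp [hiff])
end

section
/- Let G be a finite directed graph, k ≥ 0, and l' < l non-negative integers. Let C be a weakly connected component of the (k,l)-core of G and C' a weakly connected component of the (k,l')-core of G. Then either C and C' have no vertex in common, or C is a subgraph of C'. (Hence, for each fixed k, the weakly connected components of the (k,l)-cores over all values of l form a laminar family, so they can be organized into the k-tree of the D-Forest index, with each subtree corresponding to one connected (k,l)-core.) -/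
open scoped Classical

open DirGraph in
/-- for `l' < l`, a weakly connected component `C` of the (k,l)-core and a
weakly connected component `C'` of the (k,l')-core are either vertex-disjoint or `C` is
a subgraph of `C'` (laminarity underlying the k-tree of the D-Forest index). -/
theorem klCore_components_laminar {V : Type*} [DecidableEq V] (G K K' C C' : DirGraph V)
    (k l l' : ℕ) (hll : l' < l)
    (hK : G.IsKLCore k l K) (hK' : G.IsKLCore k l' K')
    (hC : K.IsComponent C) (hC' : K'.IsComponent C') :
    C.verts ∩ C'.verts = ∅ ∨ C.IsSubgraph C' := by
  have hKK' : K.IsSubgraph K' := hK'.2.2 K hK.1 (fun v hv =>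
    ⟨(hK.2.1 v hv).1, le_trans hll.le (hK.2.1 v hv).2⟩)
  obtain ⟨q, hq, rfl⟩ := hC
  obtain ⟨q', hq', rfl⟩ := hC'
  by_cases hdisj : ((K.component q).verts ∩ (K'.component q').verts) = ∅
  · exact Or.inl hdisj
  · right
    obtain ⟨v, hv⟩ := Finset.nonempty_iff_ne_empty.mpr hdisj
    rw [Finset.mem_inter] at hv
    have hv1 := Finset.mem_filter.mp hv.1
    have hv2 := Finset.mem_filter.mp hv.2
    have hmono : ∀ a b, K.Reach a b → K'.Reach a b := fun a b h =>
      Relation.ReflTransGen.mono (fun x y hxy =>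
        hxy.imp (fun h => hKK'.2 h) (fun h => hKK'.2 h)) a b h
    have hsymm : ∀ a b, K'.Reach a b → K'.Reach b a := fun a b h =>
      haveI : Std.Symm K'.Adj := ⟨fun x y hxy => hxy.symm⟩
      Relation.ReflTransGen.symmetric.symm a b h
    have hq'q : K'.Reach q' q := (hv2.2).trans (hsymm q v (hmono q v hv1.2))
    constructor
    · intro u hu
      simp only [component, Finset.mem_filter] at hu ⊢
      exact ⟨hKK'.1 hu.1, hq'q.trans (hmono q u hu.2)⟩
    · intro e he
      simp only [component, Finset.mem_filter] at he ⊢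
      exact ⟨hKK'.2 he.1, hq'q.trans (hmono q e.1 he.2)⟩
end
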